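/- For N ≥ 1 and 1 ≤ i ≤ N, define Q°(i) = θ/(N+i−1) where θ > 0 is chosen so Σ_{i=1}^N Q°(i) = 1. Then θ < lg e, and Q°(i) < lg((N+i)/(N+i−1)) + (lg e)/(2N²) for all i. -/

import Mathlib

open Real

lemma aux_quad (x : ℝ) (hx : 0 ≤ x) : x - x^2/2 ≤ Real.log (1+x) := by
  have key : ∀ y : ℝ, 0 ≤ y →
      HasDerivAt (fun t => Real.log (1+t) - t + t^2/2) ((1+y)⁻¹ - 1 + y) y := by
    intro y hy
    have h1 : HasDerivAt (fun t : ℝ => 1 + t) 1 y := (hasDerivAt_id y).const_add 1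
    have h2 : HasDerivAt (fun t : ℝ => Real.log (1+t)) (1/(1+y)) y :=
      h1.log (by positivity)
    have h3 : HasDerivAt (fun t : ℝ => t^2/2) (y) y := by
      have := (hasDerivAt_pow 2 y).div_const 2
      simpa using this
    have := (h2.sub (hasDerivAt_id y)).add h3
    have h := this
    simp only [one_div] at h
    exact h
  have mono : MonotoneOn (fun t => Real.log (1+t) - t + t^2/2) (Set.Ici (0:ℝ)) := by
    apply monotoneOn_of_deriv_nonneg (convex_Ici 0)
    · exact continuousOn_of_forall_continuousAt (fun y hy => ((key y hy).continuousAt))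
    · intro y hy
      rw [interior_Ici] at hy
      exact (key y hy.le).differentiableAt.differentiableWithinAt
    · intro y hy
      rw [interior_Ici] at hy
      have hy' : 0 < y := hy
      rw [(key y hy.le).deriv]
      have h1y : (0:ℝ) < 1 + y := by linarith
      have : (1+y)⁻¹ - 1 + y = y^2/(1+y) := by field_simp; ring
      rw [this]; positivity
  have h0 := mono (Set.self_mem_Ici) (Set.mem_Ici.mpr hx) hx
  norm_num at h0
  linarith [h0]

lemma aux_logdiff_lt (m : ℝ) (hm : 0 < m) : Real.log (m+1) - Real.log m < 1/m := by
  have hne : m ≠ 0 := ne_of_gt hm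
  rw [← Real.log_div (by positivity) hne]
  have h1 : (m+1)/m ≠ 1 := by
    intro h
    rw [div_eq_one_iff_eq hne] at h
    linarith
  have := Real.log_lt_sub_one_of_pos (x := (m+1)/m) (by positivity) h1
  have : Real.log ((m+1)/m) < (m+1)/m - 1 := this
  have heq : (m+1)/m - 1 = 1/m := by field_simp; ring
  linarith [heq ▸ this]

/-- Lemma 3: if `Q°(i) = θ/(N+i-1)` is normalized to sum to 1, then `θ < lg e` and
`Q°(i) < Q*(i) + (lg e)/(2N²)` for all `i`. -/
theorem stmt15 (N : ℕ) (hN : 1 ≤ N) (θ : ℝ) (hθ : 0 < θ)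
    (hnorm : ∑ i ∈ Finset.Icc 1 N, θ/((N:ℝ) + i - 1) = 1) :
    θ < logb 2 (exp 1) ∧
    ∀ i ∈ Finset.Icc 1 N,
      θ/((N:ℝ) + i - 1)
        < logb 2 (((N:ℝ) + i)/((N:ℝ) + i - 1)) + logb 2 (exp 1)/(2*(N:ℝ)^2) := by
  have hlog2 : (0:ℝ) < Real.log 2 := Real.log_pos (by norm_num)
  have hE : logb 2 (exp 1) = 1 / Real.log 2 := by
    simp [Real.logb, Real.log_exp]
  have hNR : (1:ℝ) ≤ (N:ℝ) := by exact_mod_cast hN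
  -- rewrite the sum over range N
  have hre : ∀ f : ℕ → ℝ, ∑ i ∈ Finset.Icc 1 N, f i = ∑ j ∈ Finset.range N, f (1+j) := by
    intro f
    rw [← Finset.Ico_add_one_right_eq_Icc, Finset.sum_Ico_eq_sum_range]
    simp
  set H : ℝ := ∑ j ∈ Finset.range N, ((N:ℝ) + j)⁻¹ with hH
  have hnorm' : θ * H = 1 := by
    rw [← hnorm, hre]
    rw [Finset.mul_sum]
    apply Finset.sum_congr rfl
    intro j hj
    push_cast
    have : (N:ℝ) + (1 + (j:ℝ)) - 1 = (N:ℝ) + j := by ring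
    rw [this, div_eq_mul_inv]
  have htel : ∑ j ∈ Finset.range N, (Real.log ((N:ℝ)+(j+1)) - Real.log ((N:ℝ)+j))
      = Real.log 2 := by
    have := Finset.sum_range_sub (fun j : ℕ => Real.log ((N:ℝ)+j)) N
    push_cast at this ⊢
    rw [this]
    have h2N : ((N:ℝ) + N) = 2 * N := by ring
    have hN0 : (0:ℝ) < (N:ℝ) := by linarith
    rw [h2N, Real.log_mul (by norm_num) (ne_of_gt hN0)]
    simp
  have hlt : Real.log 2 < H := by
    rw [← htel, hH]
    apply Finset.sum_lt_sum_of_nonempty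
    · exact Finset.nonempty_range_iff.mpr (by omega)
    · intro j hj
      have hmj : (0:ℝ) < (N:ℝ) + j := by
        have := Nat.cast_nonneg (α := ℝ) j
        linarith
      have := aux_logdiff_lt ((N:ℝ)+j) hmj
      have harr : (N:ℝ) + (↑j + 1) = ((N:ℝ)+j) + 1 := by ring
      rw [harr, one_div] at *
      linarith [this]
  have hHpos : 0 < H := lt_trans hlog2 hlt
  have hθlt : θ < 1/Real.log 2 := by
    have h1 : θ * Real.log 2 < θ * H := by
      exact mul_lt_mul_of_pos_left hlt hθ
    rw [hnorm'] at h1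
    rw [lt_div_iff₀ hlog2]
    linarith
  refine ⟨by rw [hE]; exact hθlt, ?_⟩
  intro i hi
  obtain ⟨hi1, hi2⟩ := Finset.mem_Icc.mp hi
  set m : ℝ := (N:ℝ) + i - 1 with hm
  have hiR : (1:ℝ) ≤ (i:ℝ) := by exact_mod_cast hi1
  have hmN : (N:ℝ) ≤ m := by rw [hm]; linarith
  have hm1 : (1:ℝ) ≤ m := le_trans hNR hmN
  have hm0 : (0:ℝ) < m := lt_of_lt_of_le zero_lt_one hm1
  have hmm : (N:ℝ) + i = m + 1 := by rw [hm]; ring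
  rw [hmm, hE]
  set L : ℝ := Real.log (m+1) - Real.log m with hLdef
  have hlogb : logb 2 ((m+1)/m) = L / Real.log 2 := by
    rw [Real.logb, Real.log_div (by positivity) (ne_of_gt hm0)]
  have hquad := aux_quad (1/m) (by positivity)
  have hrw : (1:ℝ) + 1/m = (m+1)/m := by field_simp
  rw [hrw, Real.log_div (by positivity) (ne_of_gt hm0)] at hquad
  have hL : 1/m - 1/(2*m^2) ≤ L := by
    have : (1/m)^2/2 = 1/(2*m^2) := by field_simp
    rw [this] at hquad
    linarith [hquad]
  have h2 : 1/(2*m^2) ≤ 1/(2*(N:ℝ)^2) := by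
    have hN0 : (0:ℝ) < (N:ℝ) := by linarith
    apply one_div_le_one_div_of_le (by positivity)
    nlinarith
  calc θ/m < (1/Real.log 2)/m := by gcongr
    _ = (1/m)/Real.log 2 := by ring
    _ ≤ (L + 1/(2*(N:ℝ)^2))/Real.log 2 := by
        gcongr
        linarith [hL, h2]
    _ = logb 2 ((m+1)/m) + (1/Real.log 2)/(2*(N:ℝ)^2) := by
        rw [hlogb]
        have hN0 : (0:ℝ) < (N:ℝ) := by linarith
        field_simp
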